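/- Let X be a compact metric space, μ a Borel probability measure on X, and k : X × X → ℝ a continuous, strictly positive kernel. Define deg_R(z) := ∫ k(z, z') dμ(z'), deg_L(z') := ∫ k(z, z')/deg_R(z) dμ(z), the normalized kernel k̃(z, z') := k(z, z')/(deg_R(z)·deg_L(z')^{1/2}), and p(z, z') := ∫ k̃(z, u)·k̃(z', u) dμ(u). Then (a) p is symmetric: p(z, z') = p(z', z) for all z, z' ∈ X; and (b) p is Markov: ∫ p(z, z') dμ(z') = 1 for every z ∈ X. In particular the constant function 1 satisfies ∫ p(z, z')·1 dμ(z') = 1 for all z, i.e., it is an eigenfunction with eigenvalue 1 of the integral operator associated to p. -/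
import Mathlib


open MeasureTheory

/-- The right degree function `deg_R(z) = ∫ k(z, z') dμ(z')`. -/
noncomputable def degR {X : Type*} [MeasurableSpace X] (μ : Measure X) (k : X → X → ℝ)
    (z : X) : ℝ :=
  ∫ z', k z z' ∂μ

/-- The left degree function `deg_L(z') = ∫ k(z, z')/deg_R(z) dμ(z)`. -/
noncomputable def degL {X : Type*} [MeasurableSpace X] (μ : Measure X) (k : X → X → ℝ)
    (z' : X) : ℝ :=
  ∫ z, k z z' / degR μ k z ∂μ

/-- The normalized kernel `k̃(z, z') = k(z, z') / (deg_R(z) · deg_L(z')^{1/2})`. -/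
noncomputable def ktilde {X : Type*} [MeasurableSpace X] (μ : Measure X) (k : X → X → ℝ)
    (z z' : X) : ℝ :=
  k z z' / (degR μ k z * Real.sqrt (degL μ k z'))

/-- The bistochastic kernel `p(z, z') = ∫ k̃(z, u) · k̃(z', u) dμ(u)`. -/
noncomputable def pker {X : Type*} [MeasurableSpace X] (μ : Measure X) (k : X → X → ℝ)
    (z z' : X) : ℝ :=
  ∫ u, ktilde μ k z u * ktilde μ k z' u ∂μ

/-- The bistochastic kernel `p` built from a continuous strictly positive kernel on a compact
metric space is symmetric and Markov; in particular the constant function `1` is an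
eigenfunction of the associated integral operator with eigenvalue `1`. -/
theorem bistochastic_kernel_symmetric_markov
    {X : Type*} [MetricSpace X] [CompactSpace X] [MeasurableSpace X] [BorelSpace X]
    (μ : Measure X) [IsProbabilityMeasure μ]
    (k : X → X → ℝ) (hk : Continuous (Function.uncurry k))
    (hkpos : ∀ z z', 0 < k z z') :
    (∀ z z', pker μ k z z' = pker μ k z' z) ∧
    (∀ z, ∫ z', pker μ k z z' ∂μ = 1) ∧
    (∀ z, ∫ z', pker μ k z z' * (1 : ℝ) ∂μ = 1) := by
  -- X is nonempty since μ is a probability measure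
  have hXne : Nonempty X := by
    by_contra h
    rw [not_nonempty_iff] at h
    have h1 : μ Set.univ = 1 := measure_univ
    rw [Set.univ_eq_empty_iff.mpr h] at h1
    simp at h1
  -- integrability of continuous functions
  have hint : ∀ f : X → ℝ, Continuous f → Integrable f μ := fun f hf =>
    hf.integrable_of_hasCompactSupport (HasCompactSupport.of_compactSpace f)
  -- min and max of k
  haveI := hXne
  obtain ⟨zm, -, hzm⟩ := isCompact_univ.exists_isMinOn (Set.univ_nonempty (α := X × X))
    hk.continuousOn
  obtain ⟨zM, -, hzM⟩ := isCompact_univ.exists_isMaxOn (Set.univ_nonempty (α := X × X))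
    hk.continuousOn
  set m : ℝ := k zm.1 zm.2 with hm_def
  set M : ℝ := k zM.1 zM.2 with hM_def
  have hmle : ∀ a b, m ≤ k a b := fun a b => hzm (Set.mem_univ (a, b))
  have hMge : ∀ a b, k a b ≤ M := fun a b => hzM (Set.mem_univ (a, b))
  have hm : 0 < m := hkpos zm.1 zm.2
  have hM : 0 < M := hkpos zM.1 zM.2
  -- continuity of slices
  have hkz_cont : ∀ z, Continuous (k z) := fun z => hk.comp (Continuous.prodMk_right z)
  have hku_cont : ∀ u, Continuous fun z => k z u := fun u =>
    hk.comp (continuous_id.prodMk continuous_const)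
  -- bounds on degR
  have hdegR_lb : ∀ z, m ≤ degR μ k z := by
    intro z
    calc m = ∫ _, m ∂μ := by simp
    _ ≤ ∫ z', k z z' ∂μ :=
      integral_mono (integrable_const m) (hint _ (hkz_cont z)) fun z' => hmle z z'
  have hdegR_ub : ∀ z, degR μ k z ≤ M := by
    intro z
    calc degR μ k z ≤ ∫ _, M ∂μ :=
        integral_mono (hint _ (hkz_cont z)) (integrable_const M) fun z' => hMge z z'
    _ = M := by simp
  have hdegR_pos : ∀ z, 0 < degR μ k z := fun z => hm.trans_le (hdegR_lb z)
  -- continuity of degR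
  have hdegR_cont : Continuous (degR μ k) := by
    apply continuous_of_dominated (bound := fun _ => M)
    · exact fun z => (hkz_cont z).aestronglyMeasurable
    · intro z
      filter_upwards with z'
      rw [Real.norm_eq_abs, abs_of_pos (hkpos z z')]
      exact hMge z z'
    · exact integrable_const M
    · filter_upwards with z'
      exact hku_cont z'
  -- the integrand of degL
  have hq_cont : ∀ u, Continuous fun z => k z u / degR μ k z := fun u =>
    (hku_cont u).div hdegR_cont fun z => (hdegR_pos z).ne'
  have hq_lb : ∀ z u, m / M ≤ k z u / degR μ k z := fun z u =>
    div_le_div₀ (hkpos z u).le (hmle z u) (hdegR_pos z) (hdegR_ub z)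
  have hq_ub : ∀ z u, k z u / degR μ k z ≤ M / m := fun z u =>
    div_le_div₀ hM.le (hMge z u) hm (hdegR_lb z)
  -- bounds on degL
  have hdegL_lb : ∀ u, m / M ≤ degL μ k u := by
    intro u
    calc m / M = ∫ _, m / M ∂μ := by simp
    _ ≤ ∫ z, k z u / degR μ k z ∂μ :=
      integral_mono (integrable_const _) (hint _ (hq_cont u)) fun z => hq_lb z u
  have hdegL_pos : ∀ u, 0 < degL μ k u := fun u => (div_pos hm hM).trans_le (hdegL_lb u)
  have hsqrt_pos : ∀ u, 0 < Real.sqrt (degL μ k u) := fun u =>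
    Real.sqrt_pos.mpr (hdegL_pos u)
  -- continuity of degL
  have hdegL_cont : Continuous (degL μ k) := by
    apply continuous_of_dominated (bound := fun _ => M / m)
    · exact fun u => (hq_cont u).aestronglyMeasurable
    · intro u
      filter_upwards with z
      rw [Real.norm_eq_abs, abs_of_pos (div_pos (hkpos z u) (hdegR_pos z))]
      exact hq_ub z u
    · exact integrable_const _
    · filter_upwards with z
      exact (hkz_cont z).div_const _
  -- continuity of ktilde
  have hkt_cont : Continuous fun p : X × X => ktilde μ k p.1 p.2 := by
    unfold ktilde
    exact hk.div
      ((hdegR_cont.comp continuous_fst).mul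
        ((Real.continuous_sqrt.comp hdegL_cont).comp continuous_snd))
      fun p => (mul_pos (hdegR_pos p.1) (hsqrt_pos p.2)).ne'
  -- column sums
  have hcol : ∀ u, ∫ z', ktilde μ k z' u ∂μ = Real.sqrt (degL μ k u) := by
    intro u
    have heq : (fun z' => ktilde μ k z' u)
        = fun z' => (k z' u / degR μ k z') / Real.sqrt (degL μ k u) := by
      funext z'
      unfold ktilde
      rw [div_div]
    rw [heq, integral_div]
    rw [show (∫ z', k z' u / degR μ k z' ∂μ) = degL μ k u from rfl]
    exact Real.div_sqrt
  -- row sums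
  have hrow : ∀ z, ∫ u, ktilde μ k z u * Real.sqrt (degL μ k u) ∂μ = 1 := by
    intro z
    have heq : (fun u => ktilde μ k z u * Real.sqrt (degL μ k u))
        = fun u => k z u / degR μ k z := by
      funext u
      unfold ktilde
      rw [← div_div, div_mul_cancel₀ _ (hsqrt_pos u).ne']
    rw [heq, integral_div, show (∫ u, k z u ∂μ) = degR μ k z from rfl,
      div_self (hdegR_pos z).ne']
  -- Markov property
  have hmarkov : ∀ z, ∫ z', pker μ k z z' ∂μ = 1 := by
    intro z
    have hprod : Integrable
        (Function.uncurry fun z' u => ktilde μ k z u * ktilde μ k z' u) (μ.prod μ) := by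
      apply Continuous.integrable_of_hasCompactSupport _ (HasCompactSupport.of_compactSpace _)
      exact ((hkt_cont.comp (continuous_const.prodMk continuous_snd)).mul
        (hkt_cont.comp (continuous_fst.prodMk continuous_snd)))
    have hswap := integral_integral_swap hprod
    unfold pker
    rw [hswap]
    have : ∀ u, (∫ z', ktilde μ k z u * ktilde μ k z' u ∂μ)
        = ktilde μ k z u * Real.sqrt (degL μ k u) := by
      intro u
      rw [integral_const_mul, hcol u]
    rw [integral_congr_ae (Filter.Eventually.of_forall this)]
    exact hrow z
  refine ⟨fun z z' => ?_, hmarkov, fun z => ?_⟩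
  · unfold pker
    congr 1
    funext u
    ring
  · simp only [mul_one]
    exact hmarkov z
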